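/- Let V : ℂ⁴ → ℂ⁴ be the vector field of the Jacobi system, V(A,B,a,b) = (2A²B, bA³, -16bA², abA²). If Ω is a constant antisymmetric 4×4 complex matrix such that Ω·(DV)(Y) is symmetric for every Y ∈ ℂ⁴, then Ω = 0. -/
import Mathlib


open Matrix Complex

/-- The Jacobian matrix of the vector field of Jacobi's system (9). -/
def DVJacobi (A B a b : ℂ) : Matrix (Fin 4) (Fin 4) ℂ :=
  !![4 * A * B, 2 * A ^ 2, 0, 0;
     3 * b * A ^ 2, 0, 0, A ^ 3;
     -32 * b * A, 0, 0, -16 * A ^ 2;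
     2 * a * b * A, 0, b * A ^ 2, a * A ^ 2]

/-- Theorem 11 for Jacobi's system (9): no nonzero constant Poisson bracket. -/
theorem no_constant_bracket_jacobi (Ω : Matrix (Fin 4) (Fin 4) ℂ)
    (hanti : Ωᵀ = -Ω)
    (hsymm : ∀ A B a b : ℂ, (Ω * DVJacobi A B a b)ᵀ = Ω * DVJacobi A B a b) :
    Ω = 0 := by
  have ha : ∀ i j, Ω j i = -Ω i j := by
    intro i j
    have := congrFun (congrFun hanti i) j
    simpa using this
  have h1 := hsymm 1 1 0 0
  have h2 := hsymm 1 0 0 1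
  have e1 := congrFun (congrFun h1 0) 1
  have e2 := congrFun (congrFun h1 0) 2
  have e3 := congrFun (congrFun h1 0) 3
  have f1 := congrFun (congrFun h2 0) 2
  have f2 := congrFun (congrFun h2 2) 1
  have f3 := congrFun (congrFun h2 0) 3
  simp [DVJacobi, Matrix.mul_apply, Fin.sum_univ_four, Matrix.vecHead, Matrix.vecTail,
    Function.comp] at e1 e2 e3 f1 f2 f3
  have hd : ∀ i, Ω i i = 0 := fun i => by linear_combination ha i i / 2
  have z10 : Ω 1 0 = 0 := by linear_combination e1 / 4 + hd 0 / 2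
  have z30 : Ω 3 0 = 0 := by
    linear_combination e3 / 4 + ha 1 0 / 4 - 4 * ha 2 0 - z10 / 4 + 4 * e2
  have z13 : Ω 1 3 = 0 := by linear_combination f2 + 2 * e2
  have z21 : Ω 2 1 = 0 := by
    linear_combination f1 / 3 + 32 / 3 * hd 2 + ha 3 0 / 3 - z30 / 3
  have z32 : Ω 3 2 = 0 := by
    linear_combination -f3 / 32 + 3 / 32 * ha 1 3 - 3 / 32 * z13 - ha 1 0 / 32 + z10 / 32
      + ha 2 0 / 2 - e2 / 2
  have z01 : Ω 0 1 = 0 := by rw [ha 1 0, z10, neg_zero]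
  have z02 : Ω 0 2 = 0 := by rw [ha 2 0, e2, neg_zero]
  have z03 : Ω 0 3 = 0 := by rw [ha 3 0, z30, neg_zero]
  have z12 : Ω 1 2 = 0 := by rw [ha 2 1, z21, neg_zero]
  have z31 : Ω 3 1 = 0 := by rw [ha 1 3, z13, neg_zero]
  have z23 : Ω 2 3 = 0 := by rw [ha 3 2, z32, neg_zero]
  ext i j
  fin_cases i <;> fin_cases j
  exacts [hd 0, z01, z02, z03, z10, hd 1, z12, z13, e2, z21, hd 2, z23, z30, z31, z32, hd 3]
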